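/- Let δ ∈ (0,1). For a ∈ (0, 1+δ) with a ≠ 1+δ and y ∈ [1−δ, 1+δ], there is a unique odd polynomial r_{a,y} of degree at most 3 with r_{a,y}(a) = 1−δ and r_{a,y}(1+δ) = y. Moreover: (1) for fixed a, if y₁ ≤ y₂ then r'_{a,y₁}(0) ≥ r'_{a,y₂}(0); and (2) if a₁ ≤ a₂ (both in (0,1+δ)) then r'_{a₁,1−δ}(0) ≥ r'_{a₂,1−δ}(0). -/

import Mathlib

lemma deriv0 (c₁ c₃ : ℝ) : deriv (fun x : ℝ => c₁ * x + c₃ * x ^ 3) 0 = c₁ := by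
  have h1 : HasDerivAt (fun x : ℝ => x) 1 0 := hasDerivAt_id 0
  have h : HasDerivAt (fun x : ℝ => c₁ * x + c₃ * x ^ 3)
      (c₁ * 1 + c₃ * ((3 : ℕ) * (0:ℝ) ^ (3 - 1) * 1)) 0 :=
    (h1.const_mul c₁).add ((h1.pow 3).const_mul c₃)
  simpa using h.deriv

lemma solve_coeffs (a b u v c₁ c₃ : ℝ)
    (hab : a * b ^ 3 - a ^ 3 * b ≠ 0)
    (h1 : c₁ * a + c₃ * a ^ 3 = u) (h2 : c₁ * b + c₃ * b ^ 3 = v) :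
    c₁ = (u * b ^ 3 - v * a ^ 3) / (a * b ^ 3 - a ^ 3 * b) ∧
    c₃ = (a * v - b * u) / (a * b ^ 3 - a ^ 3 * b) := by
  constructor
  · rw [eq_div_iff hab]
    linear_combination b ^ 3 * h1 - a ^ 3 * h2
  · rw [eq_div_iff hab]
    linear_combination a * h2 - b * h1

/-- Odd cubic interpolation `r_{a,y}` at `a` and `1+δ` (with values
`1−δ` and `y`) exists and is unique; moreover its derivative at the origin is
antitone in `y` (for fixed `a`) and, for `y = 1−δ`, antitone in `a`.
(The derivative at `0` of `x ↦ c₁x + c₃x³` is `c₁`.) -/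
theorem cubic_interpolation_derivative_monotone (δ : ℝ) (hδ : δ ∈ Set.Ioo (0:ℝ) 1) :
    (∀ a y : ℝ, a ∈ Set.Ioo (0:ℝ) (1 + δ) → a ≠ 1 + δ → y ∈ Set.Icc (1 - δ) (1 + δ) →
      ∃! r : ℝ → ℝ, (∃ c₁ c₃ : ℝ, r = fun x => c₁ * x + c₃ * x ^ 3) ∧
        r a = 1 - δ ∧ r (1 + δ) = y) ∧
    (∀ a y₁ y₂ c₁ c₃ d₁ d₃ : ℝ, a ∈ Set.Ioo (0:ℝ) (1 + δ) →
      y₁ ∈ Set.Icc (1 - δ) (1 + δ) → y₂ ∈ Set.Icc (1 - δ) (1 + δ) → y₁ ≤ y₂ →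
      c₁ * a + c₃ * a ^ 3 = 1 - δ → c₁ * (1 + δ) + c₃ * (1 + δ) ^ 3 = y₁ →
      d₁ * a + d₃ * a ^ 3 = 1 - δ → d₁ * (1 + δ) + d₃ * (1 + δ) ^ 3 = y₂ →
      deriv (fun x => d₁ * x + d₃ * x ^ 3) 0 ≤ deriv (fun x => c₁ * x + c₃ * x ^ 3) 0) ∧
    (∀ a₁ a₂ c₁ c₃ d₁ d₃ : ℝ, a₁ ∈ Set.Ioo (0:ℝ) (1 + δ) → a₂ ∈ Set.Ioo (0:ℝ) (1 + δ) →
      a₁ ≤ a₂ →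
      c₁ * a₁ + c₃ * a₁ ^ 3 = 1 - δ → c₁ * (1 + δ) + c₃ * (1 + δ) ^ 3 = 1 - δ →
      d₁ * a₂ + d₃ * a₂ ^ 3 = 1 - δ → d₁ * (1 + δ) + d₃ * (1 + δ) ^ 3 = 1 - δ →
      deriv (fun x => d₁ * x + d₃ * x ^ 3) 0 ≤ deriv (fun x => c₁ * x + c₃ * x ^ 3) 0) := by
  obtain ⟨hδ0, hδ1⟩ := hδ
  set b : ℝ := 1 + δ with hbdef
  have hb : (0:ℝ) < b := by positivity
  refine ⟨?_, ?_, ?_⟩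
  · -- existence and uniqueness
    rintro a y ⟨ha0, hab⟩ _ _
    have hdet : a * b ^ 3 - a ^ 3 * b ≠ 0 := by
      have h : a * b ^ 3 - a ^ 3 * b = a * b * ((b - a) * (b + a)) := by ring
      rw [h]
      have : (0:ℝ) < a * b * ((b - a) * (b + a)) :=
        mul_pos (mul_pos ha0 hb) (mul_pos (by linarith) (by linarith))
      exact this.ne'
    set u : ℝ := 1 - δ with hu
    set c₁ : ℝ := (u * b ^ 3 - y * a ^ 3) / (a * b ^ 3 - a ^ 3 * b) with hc1
    set c₃ : ℝ := (a * y - b * u) / (a * b ^ 3 - a ^ 3 * b) with hc3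
    refine ⟨fun x => c₁ * x + c₃ * x ^ 3, ⟨⟨c₁, c₃, rfl⟩, ?_, ?_⟩, ?_⟩
    · beta_reduce; rw [hc1, hc3, div_mul_eq_mul_div, div_mul_eq_mul_div, ← add_div, div_eq_iff hdet]; ring
    · beta_reduce; rw [hc1, hc3, div_mul_eq_mul_div, div_mul_eq_mul_div, ← add_div, div_eq_iff hdet]; ring
    · rintro r ⟨⟨d₁, d₃, rfl⟩, h1, h2⟩
      simp only at h1 h2
      obtain ⟨e1, e3⟩ := solve_coeffs a b u y d₁ d₃ hdet h1 h2
      rw [e1, e3]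
  · -- monotone in y
    rintro a y₁ y₂ c₁ c₃ d₁ d₃ ⟨ha0, hab⟩ _ _ h12 h1 h2 h3 h4
    rw [deriv0, deriv0]
    have hkey : c₁ - d₁ = (d₃ - c₃) * a ^ 2 := by
      have h : (c₁ - d₁) * a = (d₃ - c₃) * a ^ 2 * a := by linear_combination h1 - h3
      exact mul_right_cancel₀ (ne_of_gt ha0) h
    have h2' : (d₃ - c₃) * (b ^ 3 - a ^ 2 * b) = y₂ - y₁ := by
      linear_combination h4 - h2 + b * hkey
    have hpos : (0:ℝ) < b ^ 3 - a ^ 2 * b := by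
      have h : b ^ 3 - a ^ 2 * b = (b - a) * (b + a) * b := by ring
      rw [h]
      exact mul_pos (mul_pos (by linarith) (by linarith)) hb
    have hd : 0 ≤ d₃ - c₃ := by
      by_contra h
      push_neg at h
      nlinarith
    nlinarith [mul_nonneg hd (sq_nonneg a)]
  · -- monotone in a (y = 1 - δ)
    rintro a₁ a₂ c₁ c₃ d₁ d₃ ⟨ha10, ha1b⟩ ⟨ha20, ha2b⟩ h12 h1 h2 h3 h4
    rw [deriv0, deriv0]
    have hu : (0:ℝ) < 1 - δ := by linarith
    have hdp1 : (0:ℝ) < a₁ * b ^ 3 - a₁ ^ 3 * b := by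
      have h : a₁ * b ^ 3 - a₁ ^ 3 * b = a₁ * b * ((b - a₁) * (b + a₁)) := by ring
      rw [h]
      exact mul_pos (mul_pos ha10 hb) (mul_pos (by linarith) (by linarith))
    have hdp2 : (0:ℝ) < a₂ * b ^ 3 - a₂ ^ 3 * b := by
      have h : a₂ * b ^ 3 - a₂ ^ 3 * b = a₂ * b * ((b - a₂) * (b + a₂)) := by ring
      rw [h]
      exact mul_pos (mul_pos ha20 hb) (mul_pos (by linarith) (by linarith))
    have hdet1 : a₁ * b ^ 3 - a₁ ^ 3 * b ≠ 0 := hdp1.ne'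
    have hdet2 : a₂ * b ^ 3 - a₂ ^ 3 * b ≠ 0 := hdp2.ne'
    obtain ⟨e1, -⟩ := solve_coeffs a₁ b (1 - δ) (1 - δ) c₁ c₃ hdet1 h1 h2
    obtain ⟨f1, -⟩ := solve_coeffs a₂ b (1 - δ) (1 - δ) d₁ d₃ hdet2 h3 h4
    rw [e1, f1]
    rw [div_le_div_iff₀ hdp2 hdp1]
    have hkey : (0:ℝ) ≤ (1 - δ) * b ^ 3 * (a₂ - a₁) *
        ((b - a₁) * (b - a₂) * (b + a₁ + a₂)) :=
      mul_nonneg (mul_nonneg (mul_nonneg hu.le (pow_pos hb 3).le) (by linarith))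
        (mul_nonneg (mul_nonneg (by linarith) (by linarith)) (by linarith))
    nlinarith [hkey]
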